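/- arXiv:1803.07514 — 4 statements merged into one kernel-verified Lean document; each statement's English description precedes it below -/
import Mathlib

section
/- Let (Ω, F, P) be a probability space with random variables Y : Ω → ℝ (integrable), D, Z : Ω → {0,1}, and ε : Ω → E, such that Y = g(D, ε) for a measurable function g and Z is independent of ε. Suppose the homogeneity hypothesis holds: g(1,e) − g(0,e) = δ₀ for a constant δ₀ and all e. If P(D=1|Z=1) ≠ P(D=1|Z=0), then δ₀ = (E[Y|Z=1] − E[Y|Z=0]) / (P(D=1|Z=1) − P(D=1|Z=0)) = Cov(Y,Z)/Cov(D,Z). -/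
open MeasureTheory ProbabilityTheory

/-- LATE identification under homogeneous treatment effects (no covariates):
`δ₀` equals the Wald ratio and the covariance ratio. -/
theorem late_identification_homogeneous
    {Ω : Type*} [MeasurableSpace Ω] (P : Measure Ω) [IsProbabilityMeasure P]
    {E : Type*} [MeasurableSpace E]
    (Y : Ω → ℝ) (D Z : Ω → Bool) (ε : Ω → E)
    (g : Bool → E → ℝ) (δ₀ : ℝ)
    (hYint : Integrable Y P)
    (hD : Measurable D) (hZ : Measurable Z) (hε : Measurable ε)
    (hg : ∀ d, Measurable (g d))
    (hstruct : ∀ ω, Y ω = g (D ω) (ε ω))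
    (hindep : IndepFun Z ε P)
    (hhom : ∀ e, g true e - g false e = δ₀)
    (hZ1 : 0 < P {ω | Z ω = true}) (hZ0 : 0 < P {ω | Z ω = false})
    (hrel :
      (P {ω | D ω = true ∧ Z ω = true}).toReal / (P {ω | Z ω = true}).toReal ≠
      (P {ω | D ω = true ∧ Z ω = false}).toReal / (P {ω | Z ω = false}).toReal) :
    δ₀ =
      ((∫ ω in {ω | Z ω = true}, Y ω ∂P) / (P {ω | Z ω = true}).toReal -
        (∫ ω in {ω | Z ω = false}, Y ω ∂P) / (P {ω | Z ω = false}).toReal) /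
      ((P {ω | D ω = true ∧ Z ω = true}).toReal / (P {ω | Z ω = true}).toReal -
        (P {ω | D ω = true ∧ Z ω = false}).toReal / (P {ω | Z ω = false}).toReal) ∧
    δ₀ =
      ((∫ ω, Y ω * (if Z ω then (1:ℝ) else 0) ∂P) -
        (∫ ω, Y ω ∂P) * (∫ ω, (if Z ω then (1:ℝ) else 0) ∂P)) /
      ((∫ ω, (if D ω then (1:ℝ) else 0) * (if Z ω then (1:ℝ) else 0) ∂P) -
        (∫ ω, (if D ω then (1:ℝ) else 0) ∂P) * (∫ ω, (if Z ω then (1:ℝ) else 0) ∂P)) := by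
  classical
  -- basic sets and measurability
  have hms : ∀ z : Bool, MeasurableSet {ω | Z ω = z} := fun z =>
    hZ (measurableSet_singleton z)
  have hmsD : MeasurableSet {ω | D ω = true} := hD (measurableSet_singleton true)
  have hmsDZ : ∀ z : Bool, MeasurableSet {ω | D ω = true ∧ Z ω = z} := by
    intro z
    have : {ω | D ω = true ∧ Z ω = z} = {ω | D ω = true} ∩ {ω | Z ω = z} := by
      ext ω; simp [Set.mem_inter_iff]
    rw [this]; exact hmsD.inter (hms z)
  have hcompl : {ω | Z ω = false} = {ω | Z ω = true}ᶜ := by ext ω; simp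
  set q1 := (P {ω | Z ω = true}).toReal with hq1def
  set q0 := (P {ω | Z ω = false}).toReal with hq0def
  have hq1pos : 0 < q1 := ENNReal.toReal_pos hZ1.ne' (measure_ne_top P _)
  have hq0pos : 0 < q0 := ENNReal.toReal_pos hZ0.ne' (measure_ne_top P _)
  have hqsum : q1 + q0 = 1 := by
    rw [hq1def, hq0def, hcompl, ← ENNReal.toReal_add (measure_ne_top P _) (measure_ne_top P _),
      measure_add_measure_compl (hms true), measure_univ, ENNReal.toReal_one]
  set P11 := (P {ω | D ω = true ∧ Z ω = true}).toReal with hP11def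
  set P10 := (P {ω | D ω = true ∧ Z ω = false}).toReal with hP10def
  -- structural decomposition
  set h : Ω → ℝ := fun ω => g false (ε ω) with hhdef
  set Dind : Ω → ℝ := fun ω => if D ω then (1:ℝ) else 0 with hDinddef
  have hYdec : ∀ ω, Y ω = h ω + δ₀ * Dind ω := by
    intro ω
    rw [hstruct ω]
    cases hd : D ω
    · simp [h, Dind, hd]
    · have := hhom (ε ω)
      simp only [h, Dind, hd, if_true]
      linarith
  -- integrability
  have hDindeq : Dind = Set.indicator {ω | D ω = true} (fun _ => (1:ℝ)) := by
    funext ω; by_cases hd : D ω = true <;> simp [Dind, Set.indicator_apply, hd]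
  have hDint : Integrable Dind P := by
    rw [hDindeq]; exact (integrable_const (1:ℝ)).indicator hmsD
  have hhint : Integrable h P := by
    have : h = fun ω => Y ω - δ₀ * Dind ω := by
      funext ω; rw [hYdec ω]; ring
    rw [this]; exact hYint.sub (hDint.const_mul δ₀)
  set μh := ∫ ω, h ω ∂P with hμhdef
  -- indicator of {Z = z}
  have hZindeq : ∀ z : Bool, (fun ω => if Z ω = z then (1:ℝ) else 0) =
      Set.indicator {ω | Z ω = z} (fun _ => (1:ℝ)) := by
    intro z; funext ω; by_cases hz : Z ω = z <;> simp [Set.indicator_apply, hz]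
  have hZint : ∀ z : Bool, Integrable (fun ω => if Z ω = z then (1:ℝ) else 0) P := by
    intro z; rw [hZindeq z]; exact (integrable_const (1:ℝ)).indicator (hms z)
  have hZintegral : ∀ z : Bool,
      ∫ ω, (if Z ω = z then (1:ℝ) else 0) ∂P = (P {ω | Z ω = z}).toReal := by
    intro z; rw [hZindeq z, integral_indicator_const (1:ℝ) (hms z), smul_eq_mul, mul_one, measureReal_def]
  -- independence: set integral of h over {Z = z}
  have hindh : ∀ z : Bool,
      ∫ ω in {ω | Z ω = z}, h ω ∂P = μh * (P {ω | Z ω = z}).toReal := by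
    intro z
    have hφ : Measurable (fun b : Bool => if b = z then (1:ℝ) else 0) := measurable_from_top
    have hif : IndepFun (fun ω => if Z ω = z then (1:ℝ) else 0) h P := by
      have := hindep.comp hφ (hg false)
      exact this
    have hmul := ProbabilityTheory.IndepFun.integral_mul_eq_mul_integral hif (hZint z).aestronglyMeasurable hhint.aestronglyMeasurable
    have hlhs : ((fun ω => if Z ω = z then (1:ℝ) else 0) * h) =
        Set.indicator {ω | Z ω = z} h := by
      funext ω; by_cases hz : Z ω = z <;> simp [Set.indicator_apply, hz]
    rw [hlhs, integral_indicator (hms z)] at hmul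
    rw [hmul, hZintegral z, mul_comm]
  -- set integral of Dind over {Z = z}
  have hsetD : ∀ z : Bool,
      ∫ ω in {ω | Z ω = z}, Dind ω ∂P = (P {ω | D ω = true ∧ Z ω = z}).toReal := by
    intro z
    rw [hDindeq, setIntegral_indicator hmsD, setIntegral_const, smul_eq_mul, mul_one, measureReal_def]
    have : {ω | Z ω = z} ∩ {ω | D ω = true} = {ω | D ω = true ∧ Z ω = z} := by
      ext ω; simp [Set.mem_inter_iff, and_comm]
    rw [this]
  -- set integral of Y over {Z = z}
  have hsetY : ∀ z : Bool,
      ∫ ω in {ω | Z ω = z}, Y ω ∂P =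
        δ₀ * (P {ω | D ω = true ∧ Z ω = z}).toReal + μh * (P {ω | Z ω = z}).toReal := by
    intro z
    have : ∫ ω in {ω | Z ω = z}, Y ω ∂P =
        ∫ ω in {ω | Z ω = z}, (h ω + δ₀ * Dind ω) ∂P := by
      apply integral_congr_ae
      filter_upwards with ω using hYdec ω
    rw [this, integral_add hhint.integrableOn ((hDint.const_mul δ₀).integrableOn),
      integral_const_mul, hindh z, hsetD z]
    ring
  have hA1 := hsetY true
  have hA0 := hsetY false
  have hdne : P11 / q1 - P10 / q0 ≠ 0 := sub_ne_zero.mpr hrel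
  constructor
  · -- Wald ratio
    rw [hA1, hA0, ← hq1def, ← hq0def, ← hP11def, ← hP10def]
    have key : (δ₀ * P11 + μh * q1) / q1 - (δ₀ * P10 + μh * q0) / q0 =
        δ₀ * (P11 / q1 - P10 / q0) := by
      field_simp
      ring
    rw [key, mul_div_assoc, div_self hdne, mul_one]
  · -- covariance ratio
    have hYZ : ∫ ω, Y ω * (if Z ω then (1:ℝ) else 0) ∂P =
        ∫ ω in {ω | Z ω = true}, Y ω ∂P := by
      have : (fun ω => Y ω * (if Z ω then (1:ℝ) else 0)) =
          Set.indicator {ω | Z ω = true} Y := by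
        funext ω; by_cases hz : Z ω = true <;> simp [Set.indicator_apply, hz]
      rw [this, integral_indicator (hms true)]
    have hEY : ∫ ω, Y ω ∂P =
        (∫ ω in {ω | Z ω = true}, Y ω ∂P) + (∫ ω in {ω | Z ω = false}, Y ω ∂P) := by
      rw [hcompl, integral_add_compl (hms true) hYint]
    have hEZ : ∫ ω, (if Z ω then (1:ℝ) else 0) ∂P = q1 := hZintegral true
    have hDZ : ∫ ω, (if D ω then (1:ℝ) else 0) * (if Z ω then (1:ℝ) else 0) ∂P = P11 := by
      have : (fun ω => (if D ω then (1:ℝ) else 0) * (if Z ω then (1:ℝ) else 0)) =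
          Set.indicator {ω | D ω = true ∧ Z ω = true} (fun _ => (1:ℝ)) := by
        funext ω
        by_cases hd : D ω = true <;> by_cases hz : Z ω = true <;>
          simp [Set.indicator_apply, hd, hz]
      rw [this, integral_indicator_const (1:ℝ) (hmsDZ true), smul_eq_mul, mul_one, measureReal_def]
    have hED : ∫ ω, (if D ω then (1:ℝ) else 0) ∂P = P11 + P10 := by
      have h1 : ∫ ω, Dind ω ∂P =
          (∫ ω in {ω | Z ω = true}, Dind ω ∂P) + (∫ ω in {ω | Z ω = false}, Dind ω ∂P) := by
        rw [hcompl, integral_add_compl (hms true) hDint]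
      have : ∫ ω, (if D ω then (1:ℝ) else 0) ∂P = ∫ ω, Dind ω ∂P := rfl
      rw [this, h1, hsetD true, hsetD false, ← hP11def, ← hP10def]
    rw [hYZ, hEY, hEZ, hDZ, hED, hA1, hA0, ← hq1def, ← hq0def, ← hP11def, ← hP10def]
    have hq0eq : q0 = 1 - q1 := by linarith
    have hdenne : P11 - (P11 + P10) * q1 ≠ 0 := by
      have heq : P11 - (P11 + P10) * q1 = q1 * q0 * (P11 / q1 - P10 / q0) := by
        field_simp
        rw [hq0eq]; ring
      rw [heq]
      exact mul_ne_zero (mul_ne_zero hq1pos.ne' hq0pos.ne') hdne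
    have hnum : (δ₀ * P11 + μh * q1) -
        ((δ₀ * P11 + μh * q1) + (δ₀ * P10 + μh * q0)) * q1 =
        δ₀ * (P11 - (P11 + P10) * q1) := by
      rw [hq0eq]; ring
    rw [hnum, mul_div_assoc, div_self hdenne, mul_one]
end

section
/- Suppose Y = g̃(D, ν(ε)) where g̃(d, ·) is strictly increasing and continuous for d ∈ {0,1} with g̃(1,·) a bijection from ℝ onto its image, D = 1[θ(Z) ≥ η], θ(0) < θ(1), Z ∈ {0,1} with 0 < P(Z=1) < 1 and Z independent of (ε, η), and assume the support of V := ν(ε) conditional on the complier event {θ(0) < η ≤ θ(1)} equals the support of V (an interval), with the conditional CDF of V given the complier event strictly increasing on that support. Let δ := (E[Y|Z=1] − E[Y|Z=0]) / (P(D=1|Z=1) − P(D=1|Z=0)) and W := Y + (1−D)δ. If W is independent of Z, then g̃(1, τ) − g̃(0, τ) = δ for all τ in the support of V. -/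
open MeasureTheory ProbabilityTheory

/-- The (topological) support of a measure on `ℝ`. -/
def msupport (μ : MeasureTheory.Measure ℝ) : Set ℝ :=
  {x | ∀ U ∈ nhds x, 0 < μ U}


lemma aux_not_lt {μ : Measure ℝ} [IsFiniteMeasure μ] {φ ψ : ℝ → ℝ}
    (hφ : StrictMono φ) (hψ : StrictMono ψ) (hφc : Continuous φ) (hψc : Continuous ψ)
    (h : ∀ a, μ {x | φ x ≤ a} = μ {x | ψ x ≤ a})
    {τ : ℝ} (hτ : ∀ U ∈ nhds τ, 0 < μ U) : ¬ φ τ < ψ τ := by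
  intro hlt
  obtain ⟨ε₁, hε₁, hb₁⟩ : ∃ e > 0, Metric.ball τ e ⊆ {v | φ τ < ψ v} :=
    Metric.isOpen_iff.mp (isOpen_lt continuous_const hψc) τ hlt
  obtain ⟨ε₂, hε₂, hb₂⟩ : ∃ e > 0, Metric.ball τ e ⊆ {v | φ v < ψ τ} :=
    Metric.isOpen_iff.mp (isOpen_lt hφc continuous_const) τ hlt
  have key₁ : ∀ x, τ - ε₁ < x → φ τ < ψ x := by
    intro x hx
    rcases le_or_gt τ x with h' | h'
    · exact lt_of_lt_of_le hlt (hψ.monotone h')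
    · exact hb₁ (by rw [Metric.mem_ball, Real.dist_eq, abs_lt]; constructor <;> linarith)
  have key₂ : ∀ x, x < τ + ε₂ → φ x ≤ ψ τ := by
    intro x hx
    rcases le_or_gt x τ with h' | h'
    · exact le_of_lt (lt_of_le_of_lt (hφ.monotone h') hlt)
    · exact le_of_lt (hb₂ (by rw [Metric.mem_ball, Real.dist_eq, abs_lt]; constructor <;> linarith))
  have h1 : μ (Set.Iic τ) ≤ μ (Set.Iic (τ - ε₁)) := by
    calc μ (Set.Iic τ) ≤ μ {x | φ x ≤ φ τ} := measure_mono fun x hx => hφ.monotone hx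
    _ = μ {x | ψ x ≤ φ τ} := h _
    _ ≤ μ (Set.Iic (τ - ε₁)) := measure_mono fun x hx => by
        by_contra hc
        rw [Set.mem_Iic, not_le] at hc
        exact absurd hx (not_le.mpr (key₁ x hc))
  have h2 : μ (Set.Iio (τ + ε₂)) ≤ μ (Set.Iic τ) := by
    calc μ (Set.Iio (τ + ε₂)) ≤ μ {x | φ x ≤ ψ τ} := measure_mono fun x hx => key₂ x hx
    _ = μ {x | ψ x ≤ ψ τ} := h _
    _ = μ (Set.Iic τ) := by congr 1; ext x; exact hψ.le_iff_le
  have h3 : μ (Set.Ioo (τ - ε₁) (τ + ε₂)) = 0 := by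
    have hsub : Set.Ioo (τ - ε₁) (τ + ε₂) ⊆ Set.Iio (τ + ε₂) \ Set.Iic (τ - ε₁) :=
      fun x hx => ⟨hx.2, not_le.mpr hx.1⟩
    have hd : μ (Set.Iio (τ + ε₂) \ Set.Iic (τ - ε₁)) =
        μ (Set.Iio (τ + ε₂)) - μ (Set.Iic (τ - ε₁)) :=
      measure_diff (Set.Iic_subset_Iio.mpr (by linarith)) measurableSet_Iic.nullMeasurableSet
        (measure_ne_top μ _)
    have hz : μ (Set.Iio (τ + ε₂)) - μ (Set.Iic (τ - ε₁)) = 0 :=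
      tsub_eq_zero_of_le (h2.trans h1)
    exact le_antisymm (by rw [← hz, ← hd]; exact measure_mono hsub) zero_le
  have := hτ (Set.Ioo (τ - ε₁) (τ + ε₂)) (IsOpen.mem_nhds isOpen_Ioo (Set.mem_Ioo.mpr ⟨by linarith, by linarith⟩))
  simp [h3] at this

lemma aux_eq {μ : Measure ℝ} [IsFiniteMeasure μ] {φ ψ : ℝ → ℝ}
    (hφ : StrictMono φ) (hψ : StrictMono ψ) (hφc : Continuous φ) (hψc : Continuous ψ)
    (h : ∀ a, μ {x | φ x ≤ a} = μ {x | ψ x ≤ a})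
    {τ : ℝ} (hτ : ∀ U ∈ nhds τ, 0 < μ U) : φ τ = ψ τ :=
  le_antisymm (not_lt.mp (aux_not_lt hψ hφ hψc hφc (fun a => (h a).symm) hτ))
    (not_lt.mp (aux_not_lt hφ hψ hφc hψc h hτ))

/-- Sufficiency direction of Theorem 1 (no covariates): if `W = Y + (1-D)·δ`
is independent of `Z`, then treatment effects are homogeneous on the support of
the index `V = ν(ε)`. -/
theorem conditional_indep_implies_homogeneous
    {Ω : Type*} [MeasurableSpace Ω] (P : Measure Ω) [IsProbabilityMeasure P]
    {E : Type*} [MeasurableSpace E]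
    (Y : Ω → ℝ) (D Z : Ω → Bool) (ε : Ω → E) (η : Ω → ℝ)
    (gt : Bool → ℝ → ℝ) (ν : E → ℝ) (θ : Bool → ℝ)
    (hmeas : Measurable Y ∧ Measurable D ∧ Measurable Z ∧ Measurable ε ∧
      Measurable η ∧ Measurable ν)
    (hYint : Integrable Y P)
    -- single-index monotone outcome equation
    (hgmono : ∀ d, StrictMono (gt d)) (hgcont : ∀ d, Continuous (gt d))
    (hstruct : ∀ ω, Y ω = gt (D ω) (ν (ε ω)))
    -- monotone selection
    (hθ : θ false < θ true)
    (hD : ∀ ω, D ω = true ↔ η ω ≤ θ (Z ω))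
    -- instrument exogeneity and nondegeneracy
    (hindep : IndepFun Z (fun ω => (ε ω, η ω)) P)
    (hZ1 : 0 < P {ω | Z ω = true}) (hZ1' : P {ω | Z ω = true} < 1)
    (hrel :
      (P {ω | D ω = true ∧ Z ω = true}).toReal / (P {ω | Z ω = true}).toReal ≠
      (P {ω | D ω = true ∧ Z ω = false}).toReal / (P {ω | Z ω = false}).toReal)
    -- support / effectiveness condition for V = ν ∘ ε
    (hsupp :
      msupport ((P.restrict {ω | θ false < η ω ∧ η ω ≤ θ true}).map (fun ω => ν (ε ω))) =
      msupport (P.map (fun ω => ν (ε ω))))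
    (hinterval : (msupport (P.map (fun ω => ν (ε ω)))).OrdConnected)
    (hFc : StrictMonoOn
      (fun τ => (P {ω | ν (ε ω) ≤ τ ∧ θ false < η ω ∧ η ω ≤ θ true}).toReal)
      (msupport (P.map (fun ω => ν (ε ω)))))
    -- the Wald ratio δ and the generated variable W
    (δ : ℝ)
    (hδ : δ =
      ((∫ ω in {ω | Z ω = true}, Y ω ∂P) / (P {ω | Z ω = true}).toReal -
        (∫ ω in {ω | Z ω = false}, Y ω ∂P) / (P {ω | Z ω = false}).toReal) /
      ((P {ω | D ω = true ∧ Z ω = true}).toReal / (P {ω | Z ω = true}).toReal -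
        (P {ω | D ω = true ∧ Z ω = false}).toReal / (P {ω | Z ω = false}).toReal))
    (W : Ω → ℝ)
    (hW : ∀ ω, W ω = Y ω + (1 - (if D ω then (1:ℝ) else 0)) * δ)
    (hWindep : IndepFun W Z P) :
    ∀ τ ∈ msupport (P.map (fun ω => ν (ε ω))), gt true τ - gt false τ = δ := by
  obtain ⟨hY, hDm, hZm, hεm, hηm, hνm⟩ := hmeas
  have hV : Measurable (fun ω => ν (ε ω)) := hνm.comp hεm
  set V : Ω → ℝ := fun ω => ν (ε ω) with hVdef
  -- the selection function
  set f : Bool → E × ℝ → ℝ :=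
    fun z p => if p.2 ≤ θ z then gt true (ν p.1) else gt false (ν p.1) + δ with hfdef
  have hfm : ∀ z, Measurable (f z) := fun z =>
    Measurable.ite (measurableSet_le measurable_snd measurable_const)
      ((hgcont true).measurable.comp (hνm.comp measurable_fst))
      (((hgcont false).measurable.comp (hνm.comp measurable_fst)).add_const δ)
  -- W as a function of (Z, ε, η)
  have hWZ : ∀ ω, W ω = f (Z ω) (ε ω, η ω) := by
    intro ω
    rw [hW ω, hstruct ω]
    by_cases hc : η ω ≤ θ (Z ω)
    · have hDω : D ω = true := (hD ω).mpr hc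
      simp [hfdef, hDω, hc]
    · have hDω : D ω = false := by
        cases hDb : D ω
        · rfl
        · exact absurd ((hD ω).mp hDb) hc
      simp [hfdef, hDω, hc]
  have hDset : MeasurableSet {ω | D ω = true} := hDm (show MeasurableSet {true} from trivial)
  have hWm : Measurable W := by
    have hWe : W = fun ω => Y ω + (1 - (if D ω then (1:ℝ) else 0)) * δ := funext hW
    rw [hWe]
    exact hY.add ((measurable_const.sub
      (Measurable.ite hDset measurable_const measurable_const)).mul_const δ)
  -- independence computations
  have hBoolMeas : ∀ z : Bool, MeasurableSet ({z} : Set Bool) := fun z => trivial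
  have hZset : ∀ z : Bool, MeasurableSet {ω | Z ω = z} := fun z => hZm (hBoolMeas z)
  have hA : ∀ (z : Bool) (a : ℝ),
      P ({ω | f z (ε ω, η ω) ≤ a} ∩ {ω | Z ω = z}) =
        P {ω | f z (ε ω, η ω) ≤ a} * P {ω | Z ω = z} := by
    intro z a
    have h := hindep.measure_inter_preimage_eq_mul {z} ((f z) ⁻¹' Set.Iic a)
      (hBoolMeas z) ((hfm z) measurableSet_Iic)
    have e1 : Z ⁻¹' {z} = {ω | Z ω = z} := rfl
    have e2 : (fun ω => (ε ω, η ω)) ⁻¹' ((f z) ⁻¹' Set.Iic a) =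
        {ω | f z (ε ω, η ω) ≤ a} := rfl
    rw [e1, e2, Set.inter_comm] at h
    rw [h, mul_comm]
  have hB : ∀ (z : Bool) (a : ℝ),
      P ({ω | W ω ≤ a} ∩ {ω | Z ω = z}) = P {ω | W ω ≤ a} * P {ω | Z ω = z} := by
    intro z a
    have h := hWindep.measure_inter_preimage_eq_mul (Set.Iic a) {z}
      measurableSet_Iic (hBoolMeas z)
    exact h
  have hC : ∀ (z : Bool) (a : ℝ),
      ({ω | W ω ≤ a} ∩ {ω | Z ω = z}) = ({ω | f z (ε ω, η ω) ≤ a} ∩ {ω | Z ω = z}) := by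
    intro z a
    ext ω
    simp only [Set.mem_inter_iff, Set.mem_setOf_eq]
    rw [hWZ ω]
    constructor <;> rintro ⟨h1, h2⟩ <;> subst h2 <;> exact ⟨h1, rfl⟩
  -- Z = false is the complement of Z = true
  have hcompl : {ω | Z ω = false} = {ω | Z ω = true}ᶜ := by
    ext ω; simp [Bool.not_eq_true]
  have hpt_ne_top : P {ω | Z ω = true} ≠ ⊤ := measure_ne_top P _
  have hsum1 : P {ω | Z ω = true} + P {ω | Z ω = false} = 1 := by
    rw [hcompl]
    have := measure_add_measure_compl (μ := P) (hZset true)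
    rw [this]; exact measure_univ
  have hpf_ne : P {ω | Z ω = false} ≠ 0 := by
    intro h0
    rw [h0, add_zero] at hsum1
    exact (ne_of_lt hZ1') hsum1
  have hpt_ne : P {ω | Z ω = true} ≠ 0 := hZ1.ne'
  -- G functions agree
  have hG : ∀ a : ℝ, P {ω | f true (ε ω, η ω) ≤ a} = P {ω | f false (ε ω, η ω) ≤ a} := by
    intro a
    set Gt := P {ω | f true (ε ω, η ω) ≤ a} with hGt
    set Gf := P {ω | f false (ε ω, η ω) ≤ a} with hGf
    set pt := P {ω | Z ω = true} with hptd
    set pf := P {ω | Z ω = false} with hpfd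
    have hWsplit : P {ω | W ω ≤ a} = Gt * pt + Gf * pf := by
      have hsplit := measure_inter_add_diff (μ := P) {ω | W ω ≤ a} (hZset true)
      have hdiff : {ω | W ω ≤ a} \ {ω | Z ω = true} = {ω | W ω ≤ a} ∩ {ω | Z ω = false} := by
        rw [hcompl]; exact Set.diff_eq _ _
      rw [hdiff, hC true a, hC false a, hA true a, hA false a] at hsplit
      exact hsplit.symm
    have h1 : Gt * pt = (Gt * pt + Gf * pf) * pt := by
      rw [← hWsplit, ← hB true a, hC true a, hA true a]
    have h2 : Gt * pt * pt + Gt * (pt * pf) = Gt * pt * pt + Gf * (pt * pf) := by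
      have e1 : Gt * pt = Gt * pt * pt + Gt * (pt * pf) := by
        calc Gt * pt = Gt * pt * 1 := (mul_one _).symm
        _ = Gt * pt * (pt + pf) := by rw [hsum1]
        _ = Gt * pt * pt + Gt * (pt * pf) := by ring
      have e2 : (Gt * pt + Gf * pf) * pt = Gt * pt * pt + Gf * (pt * pf) := by ring
      rw [← e1, ← e2]; exact h1
    have h3 : Gt * (pt * pf) = Gf * (pt * pf) :=
      (ENNReal.add_right_inj (by
        exact ENNReal.mul_ne_top (ENNReal.mul_ne_top (measure_ne_top P _) hpt_ne_top)
          hpt_ne_top)).mp h2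
    exact (ENNReal.mul_left_inj (mul_ne_zero hpt_ne hpf_ne)
      (ENNReal.mul_ne_top hpt_ne_top (measure_ne_top P _))).mp h3
  -- partition over η-regions
  set Cs : Set Ω := {ω | θ false < η ω ∧ η ω ≤ θ true} with hCsdef
  have hCsm : MeasurableSet Cs :=
    (measurableSet_lt measurable_const hηm).inter (measurableSet_le hηm measurable_const)
  set N : Set Ω := {ω | η ω ≤ θ false} with hNdef
  set As : Set Ω := {ω | θ true < η ω} with hAsdef
  have hNm : MeasurableSet N := measurableSet_le hηm measurable_const
  have hAsm : MeasurableSet As := measurableSet_lt measurable_const hηm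
  have hS1m : ∀ a : ℝ, MeasurableSet {ω | gt true (V ω) ≤ a} := fun a =>
    measurableSet_le ((hgcont true).measurable.comp hV) measurable_const
  have hS0m : ∀ a : ℝ, MeasurableSet {ω | gt false (V ω) + δ ≤ a} := fun a =>
    measurableSet_le (((hgcont false).measurable.comp hV).add_const δ) measurable_const
  have hstar : ∀ a : ℝ, P (Cs ∩ {ω | gt true (V ω) ≤ a}) = P (Cs ∩ {ω | gt false (V ω) + δ ≤ a}) := by
    intro a
    set S1 := {ω | gt true (V ω) ≤ a} with hS1def
    set S0 := {ω | gt false (V ω) + δ ≤ a} with hS0def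
    have hft : ∀ ω, f true (ε ω, η ω) = if η ω ≤ θ true then gt true (V ω) else gt false (V ω) + δ :=
      fun ω => rfl
    have hff : ∀ ω, f false (ε ω, η ω) = if η ω ≤ θ false then gt true (V ω) else gt false (V ω) + δ :=
      fun ω => rfl
    have hdt : {ω | f true (ε ω, η ω) ≤ a} = ((N ∩ S1) ∪ (Cs ∩ S1)) ∪ (As ∩ S0) := by
      ext ω
      simp only [Set.mem_setOf_eq, Set.mem_union, Set.mem_inter_iff, hNdef, hCsdef,
        hAsdef, hS1def, hS0def, hft]
      by_cases h1 : η ω ≤ θ true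
      · rw [if_pos h1]
        constructor
        · intro hle
          rcases le_or_gt (η ω) (θ false) with h2 | h2
          · exact Or.inl (Or.inl ⟨h2, hle⟩)
          · exact Or.inl (Or.inr ⟨⟨h2, h1⟩, hle⟩)
        · rintro ((⟨_, hle⟩ | ⟨_, hle⟩) | ⟨h2, _⟩)
          · exact hle
          · exact hle
          · exact absurd h1 (not_le.mpr h2)
      · rw [if_neg h1]
        push_neg at h1
        constructor
        · intro hle; exact Or.inr ⟨h1, hle⟩
        · rintro ((⟨h2, _⟩ | ⟨⟨_, h2⟩, _⟩) | ⟨_, hle⟩)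
          · exact absurd h1 (not_lt.mpr (h2.trans hθ.le))
          · exact absurd h1 (not_lt.mpr h2)
          · exact hle
    have hdf : {ω | f false (ε ω, η ω) ≤ a} = ((N ∩ S1) ∪ (Cs ∩ S0)) ∪ (As ∩ S0) := by
      ext ω
      simp only [Set.mem_setOf_eq, Set.mem_union, Set.mem_inter_iff, hNdef, hCsdef,
        hAsdef, hS1def, hS0def, hff]
      by_cases h1 : η ω ≤ θ false
      · rw [if_pos h1]
        constructor
        · intro hle; exact Or.inl (Or.inl ⟨h1, hle⟩)
        · rintro ((⟨_, hle⟩ | ⟨⟨h2, _⟩, _⟩) | ⟨h2, _⟩)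
          · exact hle
          · exact absurd h1 (not_le.mpr h2)
          · exact absurd h1 (not_le.mpr (hθ.trans h2))
      · rw [if_neg h1]
        push_neg at h1
        constructor
        · intro hle
          rcases le_or_gt (η ω) (θ true) with h2 | h2
          · exact Or.inl (Or.inr ⟨⟨h1, h2⟩, hle⟩)
          · exact Or.inr ⟨h2, hle⟩
        · rintro ((⟨h2, _⟩ | ⟨_, hle⟩) | ⟨_, hle⟩)
          · exact absurd h1 (not_lt.mpr h2)
          · exact hle
          · exact hle
    -- disjointness
    have hd1t : Disjoint (N ∩ S1) (Cs ∩ S1) := Set.disjoint_left.mpr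
      fun ω h1 h2 => absurd h1.1 (not_le.mpr h2.1.1)
    have hd1f : Disjoint (N ∩ S1) (Cs ∩ S0) := Set.disjoint_left.mpr
      fun ω h1 h2 => absurd h1.1 (not_le.mpr h2.1.1)
    have hd2t : Disjoint ((N ∩ S1) ∪ (Cs ∩ S1)) (As ∩ S0) := Set.disjoint_left.mpr
      fun ω h1 h2 => by
        rcases h1 with h1 | h1
        · exact absurd h1.1 (not_le.mpr (hθ.trans h2.1))
        · exact absurd h1.1.2 (not_le.mpr h2.1)
    have hd2f : Disjoint ((N ∩ S1) ∪ (Cs ∩ S0)) (As ∩ S0) := Set.disjoint_left.mpr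
      fun ω h1 h2 => by
        rcases h1 with h1 | h1
        · exact absurd h1.1 (not_le.mpr (hθ.trans h2.1))
        · exact absurd h1.1.2 (not_le.mpr h2.1)
    have hGa := hG a
    rw [hdt, hdf] at hGa
    rw [measure_union hd2t (hAsm.inter (hS0m a)),
        measure_union hd2f (hAsm.inter (hS0m a)),
        measure_union hd1t (hCsm.inter (hS1m a)),
        measure_union hd1f (hCsm.inter (hS0m a))] at hGa
    have hGa' := (ENNReal.add_left_inj (measure_ne_top P _)).mp hGa
    exact (ENNReal.add_right_inj (measure_ne_top P _)).mp hGa'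
  -- transfer to the pushforward measure
  intro τ hτ
  set μ : Measure ℝ := (P.restrict Cs).map V with hμdef
  have hμapp : ∀ (s : Set ℝ), MeasurableSet s → μ s = P (Cs ∩ V ⁻¹' s) := by
    intro s hs
    rw [hμdef, Measure.map_apply hV hs, Measure.restrict_apply (hV hs), Set.inter_comm]
  have hμeq : ∀ a : ℝ, μ {x | gt true x ≤ a} = μ {x | gt false x + δ ≤ a} := by
    intro a
    have hm1 : MeasurableSet {x : ℝ | gt true x ≤ a} :=
      measurableSet_le (hgcont true).measurable measurable_const
    have hm0 : MeasurableSet {x : ℝ | gt false x + δ ≤ a} :=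
      measurableSet_le ((hgcont false).measurable.add_const δ) measurable_const
    rw [hμapp _ hm1, hμapp _ hm0]
    exact hstar a
  have hτμ : ∀ U ∈ nhds τ, 0 < μ U := by
    rw [← hsupp] at hτ
    exact hτ
  have hψmono : StrictMono (fun v => gt false v + δ) :=
    fun x y hxy => add_lt_add_of_lt_of_le (hgmono false hxy) le_rfl
  have hψcont : Continuous (fun v => gt false v + δ) :=
    (hgcont false).add continuous_const
  have := aux_eq (hgmono true) hψmono (hgcont true) hψcont hμeq hτμ
  linarith [this]
end

section
/- Let W₀, W₁ be integrable real random variables with the property that E[max(w − W₀, 0)] = E[max(w − W₁, 0)] for all w ∈ ℝ. Then W₀ and W₁ have the same distribution, i.e., P(W₀ ≤ w) = P(W₁ ≤ w) for every w ∈ ℝ. -/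
open MeasureTheory Filter Topology

private lemma maxdiff_bounds (w h x : ℝ) (hh : 0 < h) :
    (if x ≤ w then h else 0) ≤ max (w + h - x) 0 - max (w - x) 0 ∧
    max (w + h - x) 0 - max (w - x) 0 ≤ (if x ≤ w + h then h else 0) := by
  constructor
  · split_ifs with h1
    · have e1 : max (w + h - x) 0 = w + h - x := max_eq_left (by linarith)
      have e2 : max (w - x) 0 = w - x := max_eq_left (by linarith)
      rw [e1, e2]; linarith
    · have : max (w - x) 0 ≤ max (w + h - x) 0 := max_le_max (by linarith) le_rfl
      linarith
  · split_ifs with h2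
    · have : max (w + h - x) 0 ≤ max (w - x) 0 + h :=
        max_le (by have := le_max_left (w - x) 0; linarith)
          (by have := le_max_right (w - x) 0; linarith)
      linarith
    · have e1 : max (w + h - x) 0 = 0 := max_eq_right (by linarith)
      have e2 : max (w - x) 0 = 0 := max_eq_right (by linarith)
      rw [e1, e2]; norm_num

private lemma shortfall_bounds {Ω : Type*} [MeasurableSpace Ω] (P : Measure Ω)
    [IsProbabilityMeasure P] (W : Ω → ℝ) (hW : Measurable W) (hint : Integrable W P)
    (w h : ℝ) (hh : 0 < h) :
    h * (P {ω | W ω ≤ w}).toReal ≤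
      (∫ ω, max (w + h - W ω) 0 ∂P) - ∫ ω, max (w - W ω) 0 ∂P ∧
    (∫ ω, max (w + h - W ω) 0 ∂P) - ∫ ω, max (w - W ω) 0 ∂P ≤
      h * (P {ω | W ω ≤ w + h}).toReal := by
  have hI : ∀ c : ℝ, Integrable (fun ω => max (c - W ω) 0) P := fun c =>
    ((integrable_const c).sub hint).pos_part
  have hdiff : Integrable (fun ω => max (w + h - W ω) 0 - max (w - W ω) 0) P :=
    (hI (w + h)).sub (hI w)
  have hsub : (∫ ω, max (w + h - W ω) 0 ∂P) - ∫ ω, max (w - W ω) 0 ∂P =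
      ∫ ω, (max (w + h - W ω) 0 - max (w - W ω) 0) ∂P :=
    (integral_sub (hI (w + h)) (hI w)).symm
  have hms : ∀ c : ℝ, MeasurableSet {ω | W ω ≤ c} := fun c => hW measurableSet_Iic
  have hind : ∀ c : ℝ, (∫ ω, ({ω | W ω ≤ c}).indicator (fun _ => h) ω ∂P)
      = h * (P {ω | W ω ≤ c}).toReal := by
    intro c
    rw [integral_indicator_const (h : ℝ) (hms c), smul_eq_mul, mul_comm]; rfl
  constructor
  · rw [hsub, ← hind w]
    refine integral_mono ((integrable_const h).indicator (hms w)) hdiff fun ω => ?_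
    have := (maxdiff_bounds w h (W ω) hh).1
    simpa [Set.indicator_apply] using this
  · rw [hsub, ← hind (w + h)]
    refine integral_mono hdiff ((integrable_const h).indicator (hms (w + h))) fun ω => ?_
    have := (maxdiff_bounds w h (W ω) hh).2
    simpa [Set.indicator_apply] using this

private lemma cdf_tendsto {Ω : Type*} [MeasurableSpace Ω] (P : Measure Ω)
    [IsProbabilityMeasure P] (W : Ω → ℝ) (hW : Measurable W) (w : ℝ) :
    Tendsto (fun n : ℕ => (P {ω | W ω ≤ w + 1 / (n + 1)}).toReal) atTop
      (𝓝 (P {ω | W ω ≤ w}).toReal) := by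
  set s : ℕ → Set Ω := fun n => {ω | W ω ≤ w + 1 / (n + 1)} with hs
  have hmeas : ∀ n, NullMeasurableSet (s n) P := fun n =>
    (hW measurableSet_Iic).nullMeasurableSet
  have hanti : Antitone s := by
    intro m n hmn ω hω
    simp only [hs, Set.mem_setOf_eq] at hω ⊢
    have : (1 : ℝ) / (n + 1) ≤ 1 / (m + 1) := by
      apply one_div_le_one_div_of_le (by positivity)
      exact_mod_cast Nat.succ_le_succ hmn
    linarith
  have hiInter : ⋂ n, s n = {ω | W ω ≤ w} := by
    ext ω
    simp only [Set.mem_iInter, hs, Set.mem_setOf_eq]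
    constructor
    · intro hall
      by_contra hlt
      push_neg at hlt
      obtain ⟨n, hn⟩ := exists_nat_one_div_lt (sub_pos.mpr hlt)
      have := hall n
      linarith
    · intro hle n
      have : (0 : ℝ) < 1 / (n + 1) := by positivity
      linarith
  have h1 : Tendsto (P ∘ s) atTop (𝓝 (P (⋂ n, s n))) :=
    tendsto_measure_iInter_atTop hmeas hanti ⟨0, measure_ne_top _ _⟩
  rw [hiInter] at h1
  exact (ENNReal.tendsto_toReal (measure_ne_top _ _)).comp h1

/-- Equality of the expected-shortfall functions for all `w` implies equality
of the CDFs, i.e. of the distributions. -/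
theorem equal_shortfall_implies_equal_cdf
    {Ω : Type*} [MeasurableSpace Ω] (P : Measure Ω) [IsProbabilityMeasure P]
    (W₀ W₁ : Ω → ℝ) (hW₀ : Measurable W₀) (hW₁ : Measurable W₁)
    (hint₀ : Integrable W₀ P) (hint₁ : Integrable W₁ P)
    (hshortfall : ∀ w : ℝ,
      (∫ ω, max (w - W₀ ω) 0 ∂P) = ∫ ω, max (w - W₁ ω) 0 ∂P) :
    ∀ w : ℝ, P {ω | W₀ ω ≤ w} = P {ω | W₁ ω ≤ w} := by
  intro w
  set h : ℕ → ℝ := fun n => 1 / (n + 1) with hhdef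
  have hpos : ∀ n, 0 < h n := fun n => by positivity
  set a : ℕ → ℝ := fun n =>
    ((∫ ω, max (w + h n - W₀ ω) 0 ∂P) - ∫ ω, max (w - W₀ ω) 0 ∂P) / h n with hadef
  -- bounds for W₀
  have hbound₀ : ∀ n, (P {ω | W₀ ω ≤ w}).toReal ≤ a n ∧
      a n ≤ (P {ω | W₀ ω ≤ w + h n}).toReal := by
    intro n
    obtain ⟨hl, hr⟩ := shortfall_bounds P W₀ hW₀ hint₀ w (h n) (hpos n)
    constructor
    · rw [le_div_iff₀ (hpos n)]; linarith
    · rw [div_le_iff₀ (hpos n)]; linarith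
  have hbound₁ : ∀ n, (P {ω | W₁ ω ≤ w}).toReal ≤ a n ∧
      a n ≤ (P {ω | W₁ ω ≤ w + h n}).toReal := by
    intro n
    obtain ⟨hl, hr⟩ := shortfall_bounds P W₁ hW₁ hint₁ w (h n) (hpos n)
    have e1 : (∫ ω, max (w + h n - W₁ ω) 0 ∂P) = ∫ ω, max (w + h n - W₀ ω) 0 ∂P :=
      (hshortfall (w + h n)).symm
    have e2 : (∫ ω, max (w - W₁ ω) 0 ∂P) = ∫ ω, max (w - W₀ ω) 0 ∂P :=
      (hshortfall w).symm
    rw [e1, e2] at hl hr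
    constructor
    · rw [le_div_iff₀ (hpos n)]; linarith
    · rw [div_le_iff₀ (hpos n)]; linarith
  have hlim₀ : Tendsto a atTop (𝓝 (P {ω | W₀ ω ≤ w}).toReal) :=
    tendsto_of_tendsto_of_tendsto_of_le_of_le tendsto_const_nhds
      (cdf_tendsto P W₀ hW₀ w) (fun n => (hbound₀ n).1) (fun n => (hbound₀ n).2)
  have hlim₁ : Tendsto a atTop (𝓝 (P {ω | W₁ ω ≤ w}).toReal) :=
    tendsto_of_tendsto_of_tendsto_of_le_of_le tendsto_const_nhds
      (cdf_tendsto P W₁ hW₁ w) (fun n => (hbound₁ n).1) (fun n => (hbound₁ n).2)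
  have := tendsto_nhds_unique hlim₀ hlim₁
  exact (ENNReal.toReal_eq_toReal_iff' (measure_ne_top _ _) (measure_ne_top _ _)).mp this
end

section
/- Let (W, X, Z) be random variables with Z ∈ {0,1}, X real with conditional densities f_{X|Z}(·|z) > 0 for z = 0,1, and W integrable. Define f_{XZ}(x,z) = f_{X|Z}(x|z)·P(Z=z) and G(w,x,z) = E[ max(w−W, 0)·1(X ≤ x, Z = z)·f_{XZ}(X, 1−z) ]. If W is conditionally independent of Z given X, then G(w,x,0) = G(w,x,1) for all w ∈ ℝ and x ∈ ℝ. -/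
open MeasureTheory ProbabilityTheory Filter Set Topology ENNReal NNReal

theorem doob_dynkin_ae {Ω : Type*} [MeasurableSpace Ω] (P : Measure Ω)
    (X : Ω → ℝ) (hXm : Measurable X) (u : Ω → ℝ)
    (hu : StronglyMeasurable[MeasurableSpace.comap X inferInstance] u) :
    ∃ g : ℝ → ℝ, Measurable g ∧ u =ᵐ[P] fun ω => g (X ω) := by
  classical
  -- factor the approximating simple functions
  have hfac : ∀ s : @SimpleFunc Ω (MeasurableSpace.comap X inferInstance) ℝ,
      ∃ g : ℝ → ℝ, Measurable g ∧ ∀ ω, s ω = g (X ω) := by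
    intro s
    refine @SimpleFunc.induction Ω ℝ (MeasurableSpace.comap X inferInstance) _
      (fun s => ∃ g : ℝ → ℝ, Measurable g ∧ ∀ ω, s ω = g (X ω)) ?_ ?_ s
    · intro c t ht
      obtain ⟨B, hB, hBX⟩ := MeasurableSpace.measurableSet_comap.mp ht
      refine ⟨fun r => if r ∈ B then c else 0, Measurable.ite hB measurable_const
        measurable_const, fun ω => ?_⟩
      by_cases hmem : X ω ∈ B
      · have hωt : ω ∈ t := by rw [← hBX]; exact hmem
        simp [SimpleFunc.coe_piecewise, Set.piecewise, hmem, hωt]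
      · have hωt : ω ∉ t := by rw [← hBX]; exact hmem
        simp [SimpleFunc.coe_piecewise, Set.piecewise, hmem, hωt]
    · rintro f g - ⟨gf, hgf, hf⟩ ⟨gg, hgg, hg⟩
      exact ⟨gf + gg, hgf.add hgg, fun ω => by
        simp [SimpleFunc.coe_add, hf ω, hg ω]⟩
  choose gs hgs hgs_eq using fun n => hfac (hu.approx n)
  have hF : MeasurableSet {t : ℝ | ∃ c : ℝ, Tendsto (fun n => gs n t) atTop (𝓝 c)} :=
    measurableSet_exists_tendsto fun n => hgs n
  have hconv : ∀ ω, Tendsto (fun n => gs n (X ω)) atTop (𝓝 (u ω)) := by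
    intro ω
    have := hu.tendsto_approx ω
    simpa only [fun n => hgs_eq n ω] using this
  have hae : ∀ᵐ t ∂(P.map X), ∃ c : ℝ, Tendsto (fun n => gs n t) atTop (𝓝 c) := by
    rw [ae_iff]
    have hpre : X ⁻¹' {t : ℝ | ¬ ∃ c : ℝ, Tendsto (fun n => gs n t) atTop (𝓝 c)} = ∅ := by
      ext ω; simp only [Set.mem_preimage, Set.mem_setOf_eq, Set.mem_empty_iff_false,
        iff_false, not_not]
      exact ⟨u ω, hconv ω⟩
    have : {t : ℝ | ¬ ∃ c : ℝ, Tendsto (fun n => gs n t) atTop (𝓝 c)} =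
        {t : ℝ | ∃ c : ℝ, Tendsto (fun n => gs n t) atTop (𝓝 c)}ᶜ := rfl
    rw [this, Measure.map_apply hXm hF.compl]
    rw [show X ⁻¹' ({t : ℝ | ∃ c : ℝ, Tendsto (fun n => gs n t) atTop (𝓝 c)}ᶜ) = ∅ from hpre]
    simp
  obtain ⟨g, hgm, hgt⟩ := measurable_limit_of_tendsto_metrizable_ae
    (fun n => (hgs n).aemeasurable) hae
  refine ⟨g, hgm, ?_⟩
  filter_upwards [ae_of_ae_map hXm.aemeasurable hgt] with ω hω
  exact tendsto_nhds_unique (hconv ω) hω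

/-- If `W ⊥ Z | X`, then the unconditional contrast functions
`G(w,x,0)` and `G(w,x,1)` coincide. -/
theorem condIndep_implies_G_equal
    {Ω : Type*} [MeasurableSpace Ω] (P : Measure Ω) [IsProbabilityMeasure P]
    (W X : Ω → ℝ) (Z : Ω → Bool)
    (hWm : Measurable W) (hXm : Measurable X) (hZm : Measurable Z)
    (hWint : Integrable W P)
    (hZ1 : 0 < P {ω | Z ω = true}) (hZ1' : P {ω | Z ω = true} < 1)
    -- conditional densities of X given Z
    (f : ℝ → Bool → ℝ)
    (hfm : ∀ z, Measurable fun x => f x z)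
    (hfpos : ∀ x z, 0 < f x z)
    (hden : ∀ (z : Bool) (A : Set ℝ), MeasurableSet A →
      (P ({ω | X ω ∈ A} ∩ {ω | Z ω = z})).toReal =
        (P {ω | Z ω = z}).toReal * ∫ x in A, f x z)
    -- conditional independence of W and Z given X
    (hCI : ∀ h : ℝ → ℝ, Measurable h → (∃ C, ∀ t, |h t| ≤ C) →
      P[(fun ω => h (W ω)) |
          MeasurableSpace.comap (fun ω => (X ω, Z ω)) inferInstance] =ᵐ[P]
      P[(fun ω => h (W ω)) | MeasurableSpace.comap X inferInstance])
    -- the contrast function G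
    (G : ℝ → ℝ → Bool → ℝ)
    (hG : ∀ (w x : ℝ) (z : Bool),
      G w x z = ∫ ω, max (w - W ω) 0 *
        (if X ω ≤ x ∧ Z ω = z then (1:ℝ) else 0) *
        (f (X ω) (!z) * (P {ω' | Z ω' = !z}).toReal) ∂P) :
    ∀ (w x : ℝ), G w x false = G w x true := by
  classical
  intro w x
  -- basic setup
  have hmXZ_le : MeasurableSpace.comap (fun ω => (X ω, Z ω)) inferInstance ≤ ‹MeasurableSpace Ω› :=
    (hXm.prodMk hZm).comap_le
  have hmX_le : MeasurableSpace.comap X inferInstance ≤ ‹MeasurableSpace Ω› := hXm.comap_le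
  set lam : Ω → ℝ := fun ω => max (w - W ω) 0 with hlam_def
  have hlam_meas : Measurable lam := (measurable_const.sub hWm).max measurable_const
  have hlam_nn : ∀ ω, 0 ≤ lam ω := fun ω => le_max_right _ _
  have hlam_int : Integrable lam P := by
    have : Integrable (fun ω => (w - W ω) ⊔ 0) P :=
      ((integrable_const w).sub hWint).sup (integrable_const 0)
    simpa [hlam_def, max_def] using this
  -- the sets {Z = z}
  have hT : ∀ z : Bool, MeasurableSet {ω | Z ω = z} := fun z =>
    hZm (measurableSet_singleton z)
  set c : Bool → ℝ := fun z => (P {ω | Z ω = z}).toReal with hc_def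
  have hc_pos : ∀ z, 0 < c z := by
    intro z
    cases z
    · have hcompl : {ω | Z ω = false} = {ω | Z ω = true}ᶜ := by ext ω; simp
      have h1 : P {ω | Z ω = false} = 1 - P {ω | Z ω = true} := by
        rw [hcompl, prob_compl_eq_one_sub (hT true)]
      have hne : P {ω | Z ω = false} ≠ 0 := by
        rw [h1]
        intro h
        exact absurd (tsub_eq_zero_iff_le.mp h) (not_le.mpr hZ1')
      exact ENNReal.toReal_pos hne (measure_ne_top P _)
    · exact ENNReal.toReal_pos hZ1.ne' (measure_ne_top P _)
  -- Step A : conditional independence for lam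
  have hCE : P[lam | MeasurableSpace.comap (fun ω => (X ω, Z ω)) inferInstance] =ᵐ[P]
      P[lam | MeasurableSpace.comap X inferInstance] := by
    have hlamn_meas : ∀ n : ℕ, Measurable fun t : ℝ => min (max (w - t) 0) (n : ℝ) := fun n =>
      ((measurable_const.sub measurable_id).max measurable_const).min measurable_const
    have hlamn_bdd : ∀ n : ℕ, ∀ t : ℝ, |min (max (w - t) 0) (n : ℝ)| ≤ (n : ℝ) := by
      intro n t
      rw [abs_of_nonneg (le_min (le_max_right _ _) (Nat.cast_nonneg n))]
      exact min_le_right _ _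
    have hCIn : ∀ n : ℕ,
        P[(fun ω => min (lam ω) (n : ℝ)) |
            MeasurableSpace.comap (fun ω => (X ω, Z ω)) inferInstance] =ᵐ[P]
          P[(fun ω => min (lam ω) (n : ℝ)) | MeasurableSpace.comap X inferInstance] :=
      fun n => hCI (fun t => min (max (w - t) 0) (n : ℝ)) (hlamn_meas n) ⟨n, hlamn_bdd n⟩
    have hlamn_int : ∀ n : ℕ, Integrable (fun ω => min (lam ω) (n : ℝ)) P := by
      intro n
      refine hlam_int.mono ((hlam_meas.min measurable_const).aestronglyMeasurable)
        (Eventually.of_forall fun ω => ?_)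
      rw [Real.norm_eq_abs, Real.norm_eq_abs,
        abs_of_nonneg (le_min (hlam_nn ω) (Nat.cast_nonneg n)), abs_of_nonneg (hlam_nn ω)]
      exact min_le_left _ _
    set I : ℕ → ℝ := fun n => ∫ ω, |lam ω - min (lam ω) (n : ℝ)| ∂P with hI_def
    have hI_tendsto : Tendsto I atTop (𝓝 0) := by
      have h := tendsto_integral_of_dominated_convergence (μ := P)
        (F := fun (n : ℕ) ω => |lam ω - min (lam ω) (n : ℝ)|) (f := fun _ => (0 : ℝ))
        (bound := lam)
        (fun n => ((hlam_meas.sub (hlam_meas.min measurable_const)).abs).aestronglyMeasurable)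
        hlam_int
        (fun n => Eventually.of_forall fun ω => by
          rw [Real.norm_eq_abs, abs_abs,
            abs_of_nonneg (sub_nonneg.mpr (min_le_left _ _))]
          exact sub_le_self _ (le_min (hlam_nn ω) (Nat.cast_nonneg n)))
        (Eventually.of_forall fun ω => by
          refine tendsto_const_nhds.congr' ?_
          filter_upwards [eventually_ge_atTop ⌈lam ω⌉₊] with n hn
          rw [min_eq_left (le_trans (Nat.le_ceil _) (Nat.cast_le.mpr hn)), sub_self, abs_zero])
      simpa using h
    set lnf : ℕ → Ω → ℝ := fun n ω => min (lam ω) (n : ℝ) with hlnf_def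
    have hnorm_eq : ∀ n : ℕ, eLpNorm (lam - lnf n) 1 P = ENNReal.ofReal (I n) := by
      intro n
      have hint : Integrable (fun ω => |lam ω - min (lam ω) (n : ℝ)|) P :=
        (hlam_int.sub (hlamn_int n)).abs
      rw [eLpNorm_one_eq_lintegral_enorm]
      calc ∫⁻ ω, ‖(lam - lnf n) ω‖ₑ ∂P
          = ∫⁻ ω, ENNReal.ofReal (|lam ω - min (lam ω) (n : ℝ)|) ∂P := by
            refine lintegral_congr fun ω => ?_
            rw [← ofReal_norm]
            simp [Real.norm_eq_abs, hlnf_def]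
        _ = ENNReal.ofReal (I n) :=
            (ofReal_integral_eq_lintegral_ofReal hint
              (Eventually.of_forall fun ω => abs_nonneg _)).symm
    have hbound : ∀ n : ℕ,
        eLpNorm (P[lam | MeasurableSpace.comap (fun ω => (X ω, Z ω)) inferInstance] -
          P[lam | MeasurableSpace.comap X inferInstance]) 1 P ≤
          ENNReal.ofReal (I n) + ENNReal.ofReal (I n) := by
      intro n
      have hAB : (P[lam | MeasurableSpace.comap (fun ω => (X ω, Z ω)) inferInstance] -
          P[lam | MeasurableSpace.comap X inferInstance]) =ᵐ[P]
          (P[lam | MeasurableSpace.comap (fun ω => (X ω, Z ω)) inferInstance] -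
            P[lnf n | MeasurableSpace.comap (fun ω => (X ω, Z ω)) inferInstance]) +
          (P[lnf n | MeasurableSpace.comap X inferInstance] -
            P[lam | MeasurableSpace.comap X inferInstance]) := by
        filter_upwards [hCIn n] with ω hω
        have hω' : (P[lnf n | MeasurableSpace.comap (fun ω => (X ω, Z ω)) inferInstance]) ω =
            (P[lnf n | MeasurableSpace.comap X inferInstance]) ω := hω
        simp only [Pi.sub_apply, Pi.add_apply]
        rw [hω']; ring
      rw [eLpNorm_congr_ae hAB]
      refine le_trans (eLpNorm_add_le
        ((integrable_condExp.sub integrable_condExp).aestronglyMeasurable)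
        ((integrable_condExp.sub integrable_condExp).aestronglyMeasurable) le_rfl)
        (add_le_add ?_ ?_)
      · have h1 : (P[lam | MeasurableSpace.comap (fun ω => (X ω, Z ω)) inferInstance] -
            P[lnf n | MeasurableSpace.comap (fun ω => (X ω, Z ω)) inferInstance]) =ᵐ[P]
            P[lam - lnf n | MeasurableSpace.comap (fun ω => (X ω, Z ω)) inferInstance] :=
          (condExp_sub (m := MeasurableSpace.comap (fun ω => (X ω, Z ω)) inferInstance)
            hlam_int (hlamn_int n)).symm
        rw [eLpNorm_congr_ae h1]
        exact le_trans (eLpNorm_one_condExp_le_eLpNorm _) (le_of_eq (hnorm_eq n))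
      · have h2 : (P[lnf n | MeasurableSpace.comap X inferInstance] -
            P[lam | MeasurableSpace.comap X inferInstance]) =ᵐ[P]
            -(P[lam - lnf n | MeasurableSpace.comap X inferInstance]) := by
          have h3 := condExp_sub (m := MeasurableSpace.comap X inferInstance)
            hlam_int (hlamn_int n)
          filter_upwards [h3] with ω hω
          simp only [Pi.sub_apply, Pi.neg_apply] at hω ⊢
          rw [hω]; ring
        rw [eLpNorm_congr_ae h2, eLpNorm_neg]
        exact le_trans (eLpNorm_one_condExp_le_eLpNorm _) (le_of_eq (hnorm_eq n))
    have htend : Tendsto (fun n : ℕ => ENNReal.ofReal (I n) + ENNReal.ofReal (I n)) atTop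
        (𝓝 0) := by
      have h := ENNReal.tendsto_ofReal hI_tendsto
      simpa using h.add h
    have h0 : eLpNorm (P[lam | MeasurableSpace.comap (fun ω => (X ω, Z ω)) inferInstance] -
        P[lam | MeasurableSpace.comap X inferInstance]) 1 P = 0 :=
      nonpos_iff_eq_zero.mp (ge_of_tendsto htend (Eventually.of_forall hbound))
    have hsub0 : (P[lam | MeasurableSpace.comap (fun ω => (X ω, Z ω)) inferInstance] -
        P[lam | MeasurableSpace.comap X inferInstance]) =ᵐ[P] 0 :=
      (eLpNorm_eq_zero_iff
        ((integrable_condExp.sub integrable_condExp).aestronglyMeasurable) one_ne_zero).mp h0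
    filter_upwards [hsub0] with ω hω
    have : (P[lam | MeasurableSpace.comap (fun ω => (X ω, Z ω)) inferInstance]) ω -
        (P[lam | MeasurableSpace.comap X inferInstance]) ω = 0 := by simpa using hω
    linarith [this]
  -- Step B : factor the conditional expectation through X
  obtain ⟨g₀, hg₀m, hg₀⟩ :=
    doob_dynkin_ae P X hXm (P[lam | MeasurableSpace.comap X inferInstance])
      stronglyMeasurable_condExp
  -- densities
  have hfint : ∀ z, Integrable (fun t => f t z) (volume : Measure ℝ) := by
    intro z
    by_contra hni
    have h := hden z univ MeasurableSet.univ
    rw [Measure.restrict_univ, integral_undef hni, mul_zero] at h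
    have huniv : ({ω | X ω ∈ univ} ∩ {ω | Z ω = z}) = {ω | Z ω = z} := by ext ω; simp
    rw [huniv] at h
    exact (hc_pos z).ne' h
  set dens : Bool → ℝ → ℝ≥0 := fun z t => (c z * f t z).toNNReal with hdens_def
  have hdens_meas : ∀ z, Measurable (dens z) := fun z =>
    (measurable_const.mul (hfm z)).real_toNNReal
  -- the conditional law of X on {Z = z}
  have hη : ∀ z : Bool, Measure.map X (P.restrict {ω | Z ω = z}) =
      (volume : Measure ℝ).withDensity (fun t => (dens z t : ℝ≥0∞)) := by
    intro z
    ext A hA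
    rw [Measure.map_apply hXm hA, Measure.restrict_apply (hXm hA), withDensity_apply _ hA]
    have hint : IntegrableOn (fun t => c z * f t z) A volume :=
      ((hfint z).const_mul _).integrableOn
    have hnn : 0 ≤ᵐ[(volume : Measure ℝ).restrict A] fun t => c z * f t z :=
      Eventually.of_forall fun t => mul_nonneg (hc_pos z).le (hfpos t z).le
    have hOR := ofReal_integral_eq_lintegral_ofReal hint hnn
    calc P (X ⁻¹' A ∩ {ω | Z ω = z})
        = ENNReal.ofReal ((P (X ⁻¹' A ∩ {ω | Z ω = z})).toReal) :=
          (ENNReal.ofReal_toReal (measure_ne_top P _)).symm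
      _ = ENNReal.ofReal (∫ t in A, c z * f t z ∂volume) := by
          rw [show (P (X ⁻¹' A ∩ {ω | Z ω = z})).toReal =
            c z * ∫ t in A, f t z ∂volume from hden z A hA, ← integral_const_mul]
      _ = ∫⁻ t in A, ENNReal.ofReal (c z * f t z) ∂volume := hOR
      _ = ∫⁻ t in A, ((dens z t : ℝ≥0) : ℝ≥0∞) ∂volume := rfl
  -- a.e. nonnegativity of g₀
  have hg₀_nn : ∀ᵐ t ∂(volume : Measure ℝ), 0 ≤ g₀ t := by
    have hu_nn : 0 ≤ᵐ[P] P[lam | MeasurableSpace.comap X inferInstance] :=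
      condExp_nonneg (Eventually.of_forall hlam_nn)
    have hgX_nn : ∀ᵐ ω ∂P, 0 ≤ g₀ (X ω) := by
      filter_upwards [hu_nn, hg₀] with ω h1 h2
      rw [← h2]; exact h1
    have hPN : P (X ⁻¹' {t | g₀ t < 0}) = 0 := by
      have h := hgX_nn
      rw [ae_iff] at h
      have : X ⁻¹' {t | g₀ t < 0} = {ω | ¬ 0 ≤ g₀ (X ω)} := by
        ext ω; simp [not_le]
      rw [this]; exact h
    have hηN : Measure.map X (P.restrict {ω | Z ω = true}) {t | g₀ t < 0} = 0 := by
      rw [Measure.map_apply hXm (measurableSet_lt hg₀m measurable_const),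
        Measure.restrict_apply (hXm (measurableSet_lt hg₀m measurable_const))]
      exact measure_mono_null inter_subset_left hPN
    rw [hη true] at hηN
    have hvol := (withDensity_apply_eq_zero
      ((hdens_meas true).coe_nnreal_ennreal)).mp hηN
    have huniv : {t : ℝ | ((dens true t : ℝ≥0) : ℝ≥0∞) ≠ 0} = univ := by
      ext t
      simp only [mem_setOf_eq, mem_univ, iff_true, ne_eq, ENNReal.coe_eq_zero]
      intro hc0
      have : (0 : ℝ) < c true * f t true := mul_pos (hc_pos true) (hfpos t true)
      rw [hdens_def] at hc0
      simp only [Real.toNNReal_eq_zero] at hc0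
      linarith
    rw [huniv, univ_inter] at hvol
    rw [ae_iff]
    have : {t : ℝ | ¬ 0 ≤ g₀ t} = {t | g₀ t < 0} := by ext t; simp [not_le]
    rw [this]; exact hvol
  -- the key measure identity
  have hαβ : ∀ z : Bool,
      Measure.map X ((P.withDensity (fun ω => ENNReal.ofReal (lam ω))).restrict {ω | Z ω = z}) =
      (volume : Measure ℝ).withDensity (fun t => ENNReal.ofReal (g₀ t * (c z * f t z))) := by
    intro z
    ext A hA
    have hs : MeasurableSet (X ⁻¹' A ∩ {ω | Z ω = z}) := (hXm hA).inter (hT z)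
    have hs_mXZ : MeasurableSet[MeasurableSpace.comap (fun ω => (X ω, Z ω)) inferInstance]
        (X ⁻¹' A ∩ {ω | Z ω = z}) := by
      refine ⟨A ×ˢ ({z} : Set Bool), hA.prod (measurableSet_singleton z), ?_⟩
      ext ω
      simp only [Set.mem_preimage, Set.mem_prod, Set.mem_singleton_iff, Set.mem_inter_iff,
        Set.mem_setOf_eq]
    rw [Measure.map_apply hXm hA, Measure.restrict_apply (hXm hA),
      withDensity_apply _ hs, withDensity_apply _ hA]
    have hlnn : 0 ≤ᵐ[P.restrict (X ⁻¹' A ∩ {ω | Z ω = z})] lam :=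
      Eventually.of_forall hlam_nn
    rw [← ofReal_integral_eq_lintegral_ofReal hlam_int.restrict hlnn]
    have hg₀η : Integrable g₀ (Measure.map X (P.restrict {ω | Z ω = z})) :=
      (integrable_map_measure hg₀m.aestronglyMeasurable hXm.aemeasurable).mpr
        ((integrable_condExp.congr hg₀).restrict)
    have hg₀w : Integrable g₀
        ((volume : Measure ℝ).withDensity fun t => ((dens z t : ℝ≥0) : ℝ≥0∞)) := by
      rwa [hη z] at hg₀η
    have hsmul_eq : ∀ t : ℝ, dens z t • g₀ t = g₀ t * (c z * f t z) := by
      intro t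
      simp only [NNReal.smul_def, smul_eq_mul, hdens_def]
      rw [Real.coe_toNNReal _ (mul_nonneg (hc_pos z).le (hfpos t z).le), mul_comm]
    have hprod_int : Integrable (fun t => g₀ t * (c z * f t z)) (volume : Measure ℝ) := by
      have h := (integrable_withDensity_iff_integrable_smul (hdens_meas z)).mp hg₀w
      exact h.congr (Eventually.of_forall hsmul_eq)
    have hprod_nn : 0 ≤ᵐ[(volume : Measure ℝ).restrict A] fun t => g₀ t * (c z * f t z) := by
      refine ae_restrict_of_ae ?_
      filter_upwards [hg₀_nn] with t ht
      exact mul_nonneg ht (mul_nonneg (hc_pos z).le (hfpos t z).le)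
    rw [← ofReal_integral_eq_lintegral_ofReal hprod_int.integrableOn hprod_nn]
    congr 1
    calc ∫ ω in X ⁻¹' A ∩ {ω | Z ω = z}, lam ω ∂P
        = ∫ ω in X ⁻¹' A ∩ {ω | Z ω = z},
            (P[lam | MeasurableSpace.comap (fun ω => (X ω, Z ω)) inferInstance]) ω ∂P :=
          (setIntegral_condExp hmXZ_le hlam_int hs_mXZ).symm
      _ = ∫ ω in X ⁻¹' A ∩ {ω | Z ω = z},
            (P[lam | MeasurableSpace.comap X inferInstance]) ω ∂P :=
          integral_congr_ae (ae_restrict_of_ae hCE)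
      _ = ∫ ω in X ⁻¹' A ∩ {ω | Z ω = z}, g₀ (X ω) ∂P :=
          integral_congr_ae (ae_restrict_of_ae hg₀)
      _ = ∫ t in A, g₀ t ∂(Measure.map X (P.restrict {ω | Z ω = z})) := by
          rw [setIntegral_map hA hg₀m.aestronglyMeasurable hXm.aemeasurable,
            Measure.restrict_restrict (hXm hA)]
      _ = ∫ t in A, g₀ t * (c z * f t z) ∂(volume : Measure ℝ) := by
          rw [hη z, restrict_withDensity hA,
            integral_withDensity_eq_integral_smul (hdens_meas z)]
          exact integral_congr_ae (Eventually.of_forall fun t => hsmul_eq t)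
  -- main computation
  have key : ∀ z : Bool, G w x z =
      (∫⁻ t in Iic x, ENNReal.ofReal (g₀ t * (c z * f t z)) *
        ENNReal.ofReal (f t (!z) * c (!z)) ∂(volume : Measure ℝ)).toReal := by
    intro z
    have hSeq : {ω | X ω ≤ x ∧ Z ω = z} = X ⁻¹' (Iic x) ∩ {ω | Z ω = z} := by
      ext ω; simp [Set.mem_Iic]
    have hSmeas : MeasurableSet {ω | X ω ≤ x ∧ Z ω = z} := by
      rw [hSeq]; exact (hXm measurableSet_Iic).inter (hT z)
    set q : ℝ → ℝ≥0∞ := fun t => ENNReal.ofReal (f t (!z) * c (!z)) with hq_def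
    have hq_meas : Measurable q := ((hfm (!z)).mul_const _).ennreal_ofReal
    have hGz : G w x z = ∫ ω, lam ω * (if X ω ≤ x ∧ Z ω = z then (1:ℝ) else 0) *
        (f (X ω) (!z) * c (!z)) ∂P := hG w x z
    have hρ_nn : 0 ≤ᵐ[P] fun ω => lam ω * (if X ω ≤ x ∧ Z ω = z then (1:ℝ) else 0) *
        (f (X ω) (!z) * c (!z)) := by
      refine Eventually.of_forall fun ω => ?_
      refine mul_nonneg (mul_nonneg (hlam_nn ω) ?_) (mul_nonneg (hfpos _ _).le (hc_pos _).le)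
      split <;> norm_num
    have hρ_meas : AEStronglyMeasurable (fun ω => lam ω *
        (if X ω ≤ x ∧ Z ω = z then (1:ℝ) else 0) * (f (X ω) (!z) * c (!z))) P :=
      Measurable.aestronglyMeasurable <|
        (hlam_meas.mul (Measurable.ite hSmeas measurable_const measurable_const)).mul
          (((hfm (!z)).comp hXm).mul_const _)
    rw [hGz, integral_eq_lintegral_of_nonneg_ae hρ_nn hρ_meas]
    congr 1
    calc ∫⁻ ω, ENNReal.ofReal (lam ω * (if X ω ≤ x ∧ Z ω = z then (1:ℝ) else 0) *
          (f (X ω) (!z) * c (!z))) ∂P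
        = ∫⁻ ω, Set.indicator {ω | X ω ≤ x ∧ Z ω = z}
            (fun ω => ENNReal.ofReal (lam ω) * q (X ω)) ω ∂P := by
          refine lintegral_congr fun ω => ?_
          by_cases h : X ω ≤ x ∧ Z ω = z
          · have hmem : ω ∈ {ω | X ω ≤ x ∧ Z ω = z} := h
            rw [Set.indicator_of_mem hmem, if_pos h, mul_one, hq_def,
              ENNReal.ofReal_mul (hlam_nn ω)]
          · have hmem : ω ∉ {ω | X ω ≤ x ∧ Z ω = z} := h
            rw [Set.indicator_of_notMem hmem, if_neg h, mul_zero, zero_mul,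
              ENNReal.ofReal_zero]
      _ = ∫⁻ ω in {ω | X ω ≤ x ∧ Z ω = z}, ENNReal.ofReal (lam ω) * q (X ω) ∂P :=
          lintegral_indicator hSmeas _
      _ = ∫⁻ ω in X ⁻¹' (Iic x) ∩ {ω | Z ω = z}, ENNReal.ofReal (lam ω) * q (X ω) ∂P := by
          rw [hSeq]
      _ = ∫⁻ ω in X ⁻¹' (Iic x), ENNReal.ofReal (lam ω) * q (X ω)
            ∂(P.restrict {ω | Z ω = z}) := by
          rw [Measure.restrict_restrict (hXm measurableSet_Iic)]
      _ = ∫⁻ ω in X ⁻¹' (Iic x), q (X ω)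
            ∂((P.withDensity (fun ω => ENNReal.ofReal (lam ω))).restrict {ω | Z ω = z}) := by
          rw [restrict_withDensity (hT z), restrict_withDensity (hXm measurableSet_Iic),
            lintegral_withDensity_eq_lintegral_mul _ hlam_meas.ennreal_ofReal
              (show Measurable fun ω => q (X ω) from hq_meas.comp hXm)]
          rfl
      _ = ∫⁻ t in Iic x, q t ∂(Measure.map X
            ((P.withDensity (fun ω => ENNReal.ofReal (lam ω))).restrict {ω | Z ω = z})) :=
          (setLIntegral_map measurableSet_Iic hq_meas hXm).symm
      _ = ∫⁻ t in Iic x, q t ∂((volume : Measure ℝ).withDensity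
            (fun t => ENNReal.ofReal (g₀ t * (c z * f t z)))) := by rw [hαβ z]
      _ = ∫⁻ t in Iic x, ENNReal.ofReal (g₀ t * (c z * f t z)) * q t ∂(volume : Measure ℝ) := by
          rw [restrict_withDensity measurableSet_Iic,
            lintegral_withDensity_eq_lintegral_mul _
              (show Measurable fun t => ENNReal.ofReal (g₀ t * (c z * f t z)) from
                (hg₀m.mul (measurable_const.mul (hfm z))).ennreal_ofReal) hq_meas]
          rfl
  rw [key false, key true]
  congr 1
  refine lintegral_congr fun t => ?_
  show ENNReal.ofReal (g₀ t * (c false * f t false)) * ENNReal.ofReal (f t true * c true) =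
    ENNReal.ofReal (g₀ t * (c true * f t true)) * ENNReal.ofReal (f t false * c false)
  rcases le_or_gt 0 (g₀ t) with hg | hg
  · rw [ENNReal.ofReal_mul hg, ENNReal.ofReal_mul hg,
      mul_comm (c false) (f t false), mul_comm (c true) (f t true)]
    ring
  · have h1 : g₀ t * (c false * f t false) ≤ 0 :=
      mul_nonpos_iff.mpr (Or.inr ⟨hg.le, (mul_nonneg (hc_pos false).le (hfpos t false).le)⟩)
    have h2 : g₀ t * (c true * f t true) ≤ 0 :=
      mul_nonpos_iff.mpr (Or.inr ⟨hg.le, (mul_nonneg (hc_pos true).le (hfpos t true).le)⟩)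
    rw [ENNReal.ofReal_of_nonpos h1, ENNReal.ofReal_of_nonpos h2, zero_mul, zero_mul]
end
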